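/- Let X be a random vector in [0,∞)ᵈ with negatively correlated coordinates indexing the edges of the complete graph on n vertices, and let Y be the number of isolated vertices of G_{X,p}. Suppose that for every edge e, P(X_e ≤ p) ≤ q. Then E[Y²] ≤ E[Y] + (E[Y])² + n·q·E[Y]. -/

import Mathlib

open MeasureTheory
open scoped Classical

/-- The type of edges of the complete graph on `Fin n`. -/
def EdgeIdx (n : ℕ) := {e : Sym2 (Fin n) // ¬ e.IsDiag}

/-- The edge joining two distinct vertices. -/
def mkEdge {n : ℕ} (i j : Fin n) (h : i ≠ j) : EdgeIdx n :=
  ⟨s(i, j), by simpa [Sym2.mk_isDiag_iff] using h⟩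

/-- `X` has negatively correlated coordinates. -/
def NegCorrelated {Ω : Type*} [MeasurableSpace Ω] (μ : Measure Ω) {ι : Type*}
    (X : ι → Ω → ℝ) : Prop :=
  ∀ (I J : Finset ι), Disjoint I J → ∀ s t : ι → ℝ,
    (∀ i, 0 ≤ s i) → (∀ j, 0 ≤ t j) →
    μ {ω | (∀ i ∈ I, s i < |X i ω|) ∧ (∀ j ∈ J, t j < |X j ω|)} ≤
      μ {ω | ∀ i ∈ I, s i < |X i ω|} * μ {ω | ∀ j ∈ J, t j < |X j ω|}

/-- Vertex `v` is isolated in `G_{X,p}` at sample point `ω`. -/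
def IsolatedAt {n : ℕ} {Ω : Type*} (X : EdgeIdx n → Ω → ℝ) (p : ℝ) (v : Fin n)
    (ω : Ω) : Prop :=
  ∀ i, ∀ h : i ≠ v, p < X (mkEdge i v h) ω

/-- The number of isolated vertices of `G_{X,p}`. -/
noncomputable def numIsolated {n : ℕ} {Ω : Type*} (X : EdgeIdx n → Ω → ℝ) (p : ℝ)
    (ω : Ω) : ℝ :=
  ∑ v : Fin n, if IsolatedAt X p v ω then (1 : ℝ) else 0


noncomputable instance (n : ℕ) : Fintype (EdgeIdx n) := by
  unfold EdgeIdx; infer_instance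

lemma exists_mkEdge {n : ℕ} (v : Fin n) (e : EdgeIdx n) (hv : v ∈ e.1) :
    ∃ (i : Fin n) (h : i ≠ v), e = mkEdge i v h := by
  obtain ⟨e, he⟩ := e
  induction e using Sym2.ind with
  | _ a b =>
    rw [Sym2.mem_iff] at hv
    rw [Sym2.mk_isDiag_iff] at he
    rcases hv with rfl | rfl
    · exact ⟨b, fun hbv => he hbv.symm, Subtype.ext Sym2.eq_swap⟩
    · exact ⟨a, he, rfl⟩

lemma pair_bound {Ω : Type*} [MeasurableSpace Ω]
    (μ : MeasureTheory.Measure Ω) [MeasureTheory.IsProbabilityMeasure μ] (n : ℕ)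
    (X : EdgeIdx n → Ω → ℝ)
    (hnonneg : ∀ e ω, 0 ≤ X e ω)
    (hnc : NegCorrelated μ X)
    (p : ℝ) (hp : 0 < p) (q : ℝ)
    (hedge : ∀ e : EdgeIdx n, (μ {ω | X e ω ≤ p}).toReal ≤ q)
    (u v : Fin n) (huv : u ≠ v) :
    (μ ({ω | IsolatedAt X p u ω} ∩ {ω | IsolatedAt X p v ω})).toReal ≤
      (μ {ω | IsolatedAt X p u ω}).toReal * (μ {ω | IsolatedAt X p v ω}).toReal
        + q * (μ {ω | IsolatedAt X p v ω}).toReal := by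
  classical
  set A : Fin n → Set Ω := fun w => {ω | IsolatedAt X p w ω} with hA
  have habs : ∀ e ω, |X e ω| = X e ω := fun e ω => abs_of_nonneg (hnonneg e ω)
  set I : Finset (EdgeIdx n) := Finset.univ.filter (fun e => u ∈ e.1 ∧ v ∉ e.1) with hI
  set J : Finset (EdgeIdx n) := Finset.univ.filter (fun e => v ∈ e.1) with hJ
  have hdisj : Disjoint I J := by
    rw [Finset.disjoint_left]
    intro e heI heJ
    rw [hI, Finset.mem_filter] at heI
    rw [hJ, Finset.mem_filter] at heJ
    exact heI.2.2 heJ.2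
  have hJset : {ω | ∀ e ∈ J, p < |X e ω|} = A v := by
    ext ω
    constructor
    · intro h i hi
      have hm : mkEdge i v hi ∈ J := by
        rw [hJ, Finset.mem_filter]
        exact ⟨Finset.mem_univ _, by simp [mkEdge]⟩
      have := h _ hm
      rwa [habs] at this
    · intro h e he
      rw [hJ, Finset.mem_filter] at he
      obtain ⟨i, hi, rfl⟩ := exists_mkEdge v e he.2
      rw [habs]
      exact h i hi
  have hIsub : A u ⊆ {ω | ∀ e ∈ I, p < |X e ω|} := by
    intro ω hω e he
    rw [hI, Finset.mem_filter] at he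
    obtain ⟨i, hi, rfl⟩ := exists_mkEdge u e he.2.1
    rw [habs]
    exact hω i hi
  have hIsub2 : {ω | ∀ e ∈ I, p < |X e ω|} ⊆
      A u ∪ {ω | X (mkEdge u v huv) ω ≤ p} := by
    intro ω hω
    by_cases hc : X (mkEdge u v huv) ω ≤ p
    · exact Or.inr hc
    · left
      intro i hi
      by_cases hiv : i = v
      · subst hiv
        have h' : mkEdge i u hi = mkEdge u i huv := Subtype.ext Sym2.eq_swap
        rw [h']
        exact lt_of_not_ge hc
      · have hm : mkEdge i u hi ∈ I := by
          rw [hI, Finset.mem_filter]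
          refine ⟨Finset.mem_univ _, by simp [mkEdge], ?_⟩
          simp only [mkEdge, Sym2.mem_iff]
          push_neg
          exact ⟨fun h => hiv h.symm, fun h => huv h.symm⟩
        have := hω _ hm
        rwa [habs] at this
  have h1 : μ (A u ∩ A v) ≤ μ {ω | ∀ e ∈ I, p < |X e ω|} * μ (A v) := by
    calc μ (A u ∩ A v)
        ≤ μ {ω | (∀ e ∈ I, p < |X e ω|) ∧ (∀ e ∈ J, p < |X e ω|)} := by
          apply MeasureTheory.measure_mono
          intro ω hω
          exact ⟨hIsub hω.1, by rw [← hJset] at hω; exact hω.2⟩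
      _ ≤ μ {ω | ∀ e ∈ I, p < |X e ω|} * μ {ω | ∀ e ∈ J, p < |X e ω|} :=
          hnc I J hdisj (fun _ => p) (fun _ => p) (fun _ => hp.le) (fun _ => hp.le)
      _ = μ {ω | ∀ e ∈ I, p < |X e ω|} * μ (A v) := by rw [hJset]
  have h2 : μ {ω | ∀ e ∈ I, p < |X e ω|} ≤ μ (A u) + μ {ω | X (mkEdge u v huv) ω ≤ p} :=
    le_trans (MeasureTheory.measure_mono hIsub2) (MeasureTheory.measure_union_le _ _)
  have h3 : (μ (A u ∩ A v)).toReal ≤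
      (μ {ω | ∀ e ∈ I, p < |X e ω|}).toReal * (μ (A v)).toReal := by
    rw [← ENNReal.toReal_mul]
    exact ENNReal.toReal_mono
      (ENNReal.mul_ne_top (MeasureTheory.measure_ne_top μ _) (MeasureTheory.measure_ne_top μ _)) h1
  have h4 : (μ {ω | ∀ e ∈ I, p < |X e ω|}).toReal ≤ (μ (A u)).toReal + q := by
    have := ENNReal.toReal_mono
      (by exact ENNReal.add_ne_top.2 ⟨MeasureTheory.measure_ne_top μ _,
        MeasureTheory.measure_ne_top μ _⟩) h2
    rw [ENNReal.toReal_add (MeasureTheory.measure_ne_top μ _)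
      (MeasureTheory.measure_ne_top μ _)] at this
    linarith [hedge (mkEdge u v huv)]
  calc (μ (A u ∩ A v)).toReal
      ≤ (μ {ω | ∀ e ∈ I, p < |X e ω|}).toReal * (μ (A v)).toReal := h3
    _ ≤ ((μ (A u)).toReal + q) * (μ (A v)).toReal :=
        mul_le_mul_of_nonneg_right h4 ENNReal.toReal_nonneg
    _ = (μ (A u)).toReal * (μ (A v)).toReal + q * (μ (A v)).toReal := by ring

theorem second_moment_isolated_vertices {Ω : Type*} [MeasurableSpace Ω]
    (μ : Measure Ω) [IsProbabilityMeasure μ] (n : ℕ) (hn : 2 ≤ n)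
    (X : EdgeIdx n → Ω → ℝ)
    (hmeas : ∀ e, Measurable (X e))
    (hnonneg : ∀ e ω, 0 ≤ X e ω)
    (hnc : NegCorrelated μ X)
    (p : ℝ) (hp : 0 < p) (q : ℝ) (hq : 0 ≤ q)
    (hedge : ∀ e : EdgeIdx n, (μ {ω | X e ω ≤ p}).toReal ≤ q) :
    ∫ ω, (numIsolated X p ω) ^ 2 ∂μ ≤
      (∫ ω, numIsolated X p ω ∂μ) + (∫ ω, numIsolated X p ω ∂μ) ^ 2 +
        n * q * ∫ ω, numIsolated X p ω ∂μ := by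
  classical
  set A : Fin n → Set Ω := fun v => {ω | IsolatedAt X p v ω} with hA
  have hAmeas : ∀ v, MeasurableSet (A v) := by
    intro v
    have h : A v = ⋂ i, ⋂ h : i ≠ v, {ω | p < X (mkEdge i v h) ω} := by
      ext ω; simp [hA, IsolatedAt, Set.mem_iInter]
    rw [h]
    exact MeasurableSet.iInter fun i => MeasurableSet.iInter fun h =>
      measurableSet_lt measurable_const (hmeas _)
  have hEY : ∫ ω, numIsolated X p ω ∂μ = ∑ v, (μ (A v)).toReal := by
    have hpt : ∀ ω, numIsolated X p ω = ∑ v, (A v).indicator (fun _ => (1:ℝ)) ω := by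
      intro ω; unfold numIsolated
      exact Finset.sum_congr rfl fun v _ => by simp [Set.indicator_apply, hA]
    rw [show (fun ω => numIsolated X p ω) = fun ω => ∑ v, (A v).indicator (fun _ => (1:ℝ)) ω
      from funext hpt]
    rw [integral_finset_sum _ (fun v _ => (integrable_const (1:ℝ)).indicator (hAmeas v))]
    refine Finset.sum_congr rfl fun v _ => ?_
    rw [integral_indicator_const (1:ℝ) (hAmeas v)]; simp [Measure.real]
  have hEY2 : ∫ ω, (numIsolated X p ω) ^ 2 ∂μ = ∑ u, ∑ v, (μ (A u ∩ A v)).toReal := by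
    have hpt : ∀ ω, (numIsolated X p ω)^2
        = ∑ u, ∑ v, (A u ∩ A v).indicator (fun _ => (1:ℝ)) ω := by
      intro ω; unfold numIsolated
      rw [sq, Finset.sum_mul_sum]
      refine Finset.sum_congr rfl fun u _ => Finset.sum_congr rfl fun v _ => ?_
      by_cases h1 : IsolatedAt X p u ω <;> by_cases h2 : IsolatedAt X p v ω <;>
        simp [Set.indicator_apply, Set.mem_inter_iff, hA, h1, h2]
    rw [show (fun ω => (numIsolated X p ω)^2)
        = fun ω => ∑ u, ∑ v, (A u ∩ A v).indicator (fun _ => (1:ℝ)) ω from funext hpt]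
    rw [integral_finset_sum _ (fun u _ => integrable_finset_sum _
      (fun v _ => (integrable_const (1:ℝ)).indicator ((hAmeas u).inter (hAmeas v))))]
    refine Finset.sum_congr rfl fun u _ => ?_
    rw [integral_finset_sum _ (fun v _ => (integrable_const (1:ℝ)).indicator
      ((hAmeas u).inter (hAmeas v)))]
    refine Finset.sum_congr rfl fun v _ => ?_
    rw [integral_indicator_const (1:ℝ) ((hAmeas u).inter (hAmeas v))]; simp [Measure.real]
  set pV : Fin n → ℝ := fun v => (μ (A v)).toReal with hpV
  have hpnn : ∀ v, 0 ≤ pV v := fun v => ENNReal.toReal_nonneg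
  have hSnn : 0 ≤ ∑ v, pV v := Finset.sum_nonneg fun v _ => hpnn v
  have hterm : ∀ u v : Fin n, (μ (A u ∩ A v)).toReal ≤
      (if u = v then pV v else 0) + (pV u * pV v + q * pV v) := by
    intro u v
    by_cases h : u = v
    · subst h
      rw [Set.inter_self, if_pos rfl]
      have h1 : 0 ≤ pV u * pV u := mul_nonneg (hpnn u) (hpnn u)
      have h2 : 0 ≤ q * pV u := mul_nonneg hq (hpnn u)
      have h3 : (μ (A u)).toReal = pV u := rfl
      linarith
    · simpa [h] using pair_bound μ n X hnonneg hnc p hp q hedge u v h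
  rw [hEY, hEY2]
  calc ∑ u, ∑ v, (μ (A u ∩ A v)).toReal
      ≤ ∑ u : Fin n, ∑ v : Fin n,
          ((if u = v then pV v else 0) + (pV u * pV v + q * pV v)) :=
        Finset.sum_le_sum fun u _ => Finset.sum_le_sum fun v _ => hterm u v
    _ = (∑ v, pV v) + ((∑ v, pV v) ^ 2 + n * q * ∑ v, pV v) := by
        simp only [Finset.sum_add_distrib, Finset.sum_ite_eq, Finset.mem_univ, if_pos,
          ← Finset.mul_sum, ← Finset.sum_mul, Finset.sum_const, Finset.card_univ,
          Fintype.card_fin, nsmul_eq_mul]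
        ring
    _ = (∑ v, pV v) + (∑ v, pV v) ^ 2 + n * q * ∑ v, pV v := by ring
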